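/- Let μ be a measure on ℝ and fix a reference point c. Define u₀ ≡ 1 and inductively u_n(x) = ∫_{(x,∞)} (z − x) u_{n−1}(z) μ(dz) for x ≥ c, and suppose u₁(c) < ∞ and each u_n is finite, nonnegative and decreasing. Then u_n(x) ≤ u₁(x)^n / n! for all n ≥ 1 and x ≥ c. -/

import Mathlib

open Filter Set MeasureTheory
open scoped ENNReal

namespace Stmt5Aux

lemma sigmaFinite_restrict_Ioi (μ : Measure ℝ) (x : ℝ)
    (h : ∀ y, x < y → μ (Set.Ioi y) ≠ ∞) :
    SigmaFinite (μ.restrict (Set.Ioi x)) := by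
  refine ⟨⟨⟨fun n => Set.Iic x ∪ Set.Ioi (x + ((n : ℝ) + 1)⁻¹), fun _ => trivial, ?_, ?_⟩⟩⟩
  · intro n
    have hpos : (0:ℝ) < ((n : ℝ) + 1)⁻¹ := by positivity
    have hlt : x < x + ((n : ℝ) + 1)⁻¹ := by linarith
    have h1 : Set.Iic x ∩ Set.Ioi x = (∅ : Set ℝ) := by
      ext z; simp only [Set.mem_inter_iff, Set.mem_Iic, Set.mem_Ioi, Set.mem_empty_iff_false,
        iff_false, not_and, not_lt]
      exact fun hz => hz
    have h2 : Set.Ioi (x + ((n : ℝ) + 1)⁻¹) ∩ Set.Ioi x = Set.Ioi (x + ((n : ℝ) + 1)⁻¹) :=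
      Set.inter_eq_left.mpr (Set.Ioi_subset_Ioi hlt.le)
    calc μ.restrict (Set.Ioi x) (Set.Iic x ∪ Set.Ioi (x + ((n : ℝ) + 1)⁻¹))
        ≤ μ.restrict (Set.Ioi x) (Set.Iic x)
            + μ.restrict (Set.Ioi x) (Set.Ioi (x + ((n : ℝ) + 1)⁻¹)) := measure_union_le _ _
      _ = μ (Set.Iic x ∩ Set.Ioi x) + μ (Set.Ioi (x + ((n : ℝ) + 1)⁻¹) ∩ Set.Ioi x) := by
          rw [Measure.restrict_apply measurableSet_Iic, Measure.restrict_apply measurableSet_Ioi]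
      _ = μ (Set.Ioi (x + ((n : ℝ) + 1)⁻¹)) := by rw [h1, h2]; simp
      _ < ∞ := (h _ hlt).lt_top
  · rw [Set.eq_univ_iff_forall]
    intro z
    rcases le_or_gt z x with hz | hz
    · exact Set.mem_iUnion.mpr ⟨0, Or.inl hz⟩
    · obtain ⟨n, hn⟩ := exists_nat_one_div_lt (sub_pos.2 hz)
      refine Set.mem_iUnion.mpr ⟨n, Or.inr ?_⟩
      have : ((n : ℝ) + 1)⁻¹ < z - x := by rwa [one_div] at hn
      simp only [Set.mem_Ioi]; linarith

lemma finmeas (μ : Measure ℝ) (x : ℝ)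
    (hlt : ∫⁻ z in Set.Ioi x, ENNReal.ofReal (z - x) ∂μ ≠ ∞) :
    ∀ y, x < y → μ (Set.Ioi y) ≠ ∞ := by
  intro y hy
  have h1 : ENNReal.ofReal (y - x) * μ (Set.Ioi y)
      ≤ ∫⁻ z in Set.Ioi x, ENNReal.ofReal (z - x) ∂μ := by
    calc ENNReal.ofReal (y - x) * μ (Set.Ioi y)
        = ∫⁻ _ in Set.Ioi y, ENNReal.ofReal (y - x) ∂μ := (setLIntegral_const _ _).symm
      _ ≤ ∫⁻ z in Set.Ioi y, ENNReal.ofReal (z - x) ∂μ :=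
          setLIntegral_mono' measurableSet_Ioi fun z hz =>
            ENNReal.ofReal_le_ofReal (by simp only [Set.mem_Ioi] at hz; linarith)
      _ ≤ ∫⁻ z in Set.Ioi x, ENNReal.ofReal (z - x) ∂μ :=
          lintegral_mono_set (Set.Ioi_subset_Ioi hy.le)
  intro htop
  rw [htop, ENNReal.mul_top (by simp [ENNReal.ofReal_eq_zero]; linarith)] at h1
  exact hlt (top_le_iff.mp h1)

lemma swap_mu (μ : Measure ℝ) (x : ℝ) [SigmaFinite (μ.restrict (Set.Ioi x))]
    (G : ℝ → ℝ≥0∞) (hG : Measurable G) :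
    ∫⁻ z in Set.Ioi x, ENNReal.ofReal (z - x) * G z ∂μ
      = ∫⁻ y in Set.Ioi x, ∫⁻ z in Set.Ioi y, G z ∂μ := by
  have hf : AEMeasurable (Function.uncurry fun z y => if y < z then G z else 0)
      ((μ.restrict (Set.Ioi x)).prod (volume.restrict (Set.Ioi x))) := by
    refine Measurable.aemeasurable ?_
    have : (Function.uncurry fun z y => if y < z then G z else 0)
        = fun p : ℝ × ℝ => if p.2 < p.1 then G p.1 else 0 := rfl
    rw [this]
    exact Measurable.ite (measurableSet_lt measurable_snd measurable_fst)
      (hG.comp measurable_fst) measurable_const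
  have hswap := lintegral_lintegral_swap hf
  have hL : ∀ z : ℝ, (∫⁻ y in Set.Ioi x, (if y < z then G z else 0))
      = ENNReal.ofReal (z - x) * G z := by
    intro z
    have : (fun y => if y < z then G z else 0) = (Set.Iio z).indicator fun _ => G z := by
      funext y; simp [Set.indicator_apply, Set.mem_Iio]
    rw [this, lintegral_indicator measurableSet_Iio, Measure.restrict_restrict measurableSet_Iio,
      Set.Iio_inter_Ioi, setLIntegral_const, Real.volume_Ioo, mul_comm]
  have hR : ∀ y ∈ Set.Ioi x, (∫⁻ z in Set.Ioi x, (if y < z then G z else 0) ∂μ)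
      = ∫⁻ z in Set.Ioi y, G z ∂μ := by
    intro y hy
    have : (fun z => if y < z then G z else 0) = (Set.Ioi y).indicator G := by
      funext z; simp [Set.indicator_apply, Set.mem_Ioi]
    rw [this, lintegral_indicator measurableSet_Ioi, Measure.restrict_restrict measurableSet_Ioi,
      Set.Ioi_inter_Ioi, sup_eq_left.mpr (le_of_lt hy)]
  calc ∫⁻ z in Set.Ioi x, ENNReal.ofReal (z - x) * G z ∂μ
      = ∫⁻ z in Set.Ioi x, (∫⁻ y in Set.Ioi x, (if y < z then G z else 0)) ∂μ := by
        refine setLIntegral_congr_fun measurableSet_Ioi ?_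
        intro z _; dsimp only; rw [hL z]
    _ = ∫⁻ y in Set.Ioi x, (∫⁻ z in Set.Ioi x, (if y < z then G z else 0) ∂μ) := hswap
    _ = ∫⁻ y in Set.Ioi x, ∫⁻ z in Set.Ioi y, G z ∂μ :=
        setLIntegral_congr_fun measurableSet_Ioi hR


lemma core (m : ℝ → ℝ≥0∞) (hm : Measurable m) (hmanti : Antitone m) :
    ∀ (n : ℕ) (x : ℝ), (∫⁻ t in Set.Ioi x, m t) ≠ ∞ →
      (∫⁻ y in Set.Ioi x, m y * (∫⁻ t in Set.Ioi y, m t) ^ n)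
        = (∫⁻ t in Set.Ioi x, m t) ^ (n + 1) / (n + 1) := by
  set M : ℝ → ℝ≥0∞ := fun y => ∫⁻ t in Set.Ioi y, m t with hMdef
  have hManti : Antitone M := fun a b hab =>
    lintegral_mono_set (Set.Ioi_subset_Ioi hab)
  have hMmeas : Measurable M := hManti.measurable
  intro n
  induction n with
  | zero =>
    intro x hx
    simp only [pow_zero, mul_one, zero_add, pow_one, Nat.cast_zero]
    rw [div_one]
  | succ n ih =>
    intro x hx
    -- finiteness of m on Ioi x
    have hmfin : ∀ t, x < t → m t ≠ ∞ := by
      intro t ht htop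
      apply hx
      have h1 : (∫⁻ _ in Set.Ioo x t, m t) ≤ M x := by
        calc (∫⁻ _ in Set.Ioo x t, m t)
            ≤ ∫⁻ y in Set.Ioo x t, m y :=
              setLIntegral_mono' measurableSet_Ioo fun y hy => hmanti hy.2.le
          _ ≤ M x := lintegral_mono_set Set.Ioo_subset_Ioi_self
      rw [setLIntegral_const, htop, Real.volume_Ioo,
        ENNReal.top_mul (by simp [ENNReal.ofReal_eq_zero]; linarith)] at h1
      exact top_le_iff.mp h1
    have hMfin : ∀ t, x ≤ t → M t ≠ ∞ := fun t ht h =>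
      hx (top_le_iff.mp (h ▸ hManti ht))
    -- split lemma
    have hsplit : ∀ t, x < t →
        (∫⁻ y in Set.Ioo x t, m y * M y ^ n)
          = M x ^ (n + 1) / (n + 1) - M t ^ (n + 1) / (n + 1) := by
      intro t ht
      have hu : Set.Ioo x t ∪ Set.Ici t = Set.Ioi x := Set.Ioo_union_Ici_eq_Ioi ht
      have hdisj : Disjoint (Set.Ioo x t) (Set.Ici t) := by
        rw [Set.disjoint_left]; intro a ha ha'; exact absurd ha.2 (not_lt.mpr ha')
      have hadd : (∫⁻ y in Set.Ioi x, m y * M y ^ n)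
          = (∫⁻ y in Set.Ioo x t, m y * M y ^ n) + ∫⁻ y in Set.Ici t, m y * M y ^ n := by
        rw [← hu, lintegral_union measurableSet_Ici hdisj]
      have hIci : (∫⁻ y in Set.Ici t, m y * M y ^ n) = ∫⁻ y in Set.Ioi t, m y * M y ^ n :=
        (setLIntegral_congr Ioi_ae_eq_Ici).symm
      rw [hIci, ih t (hMfin t ht.le), ih x hx] at hadd
      have hfin : M t ^ (n + 1) / ((n : ℝ≥0∞) + 1) ≠ ∞ := by
        exact (ENNReal.div_lt_top (ENNReal.pow_ne_top (hMfin t ht.le)) (by simp)).ne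
      exact ENNReal.eq_sub_of_add_eq hfin hadd.symm
    -- the swap
    have hf : AEMeasurable (Function.uncurry fun y t => if y < t then m y * M y ^ n * m t else 0)
        ((volume.restrict (Set.Ioi x)).prod (volume.restrict (Set.Ioi x))) := by
      refine Measurable.aemeasurable ?_
      have : (Function.uncurry fun y t => if y < t then m y * M y ^ n * m t else 0)
          = fun p : ℝ × ℝ => if p.1 < p.2 then m p.1 * M p.1 ^ n * m p.2 else 0 := rfl
      rw [this]
      exact Measurable.ite (measurableSet_lt measurable_fst measurable_snd)
        (((hm.comp measurable_fst).mul ((hMmeas.comp measurable_fst).pow_const n)).mul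
          (hm.comp measurable_snd)) measurable_const
    have hswap := lintegral_lintegral_swap hf
    have hL : ∀ y ∈ Set.Ioi x, (∫⁻ t in Set.Ioi x, (if y < t then m y * M y ^ n * m t else 0))
        = m y * M y ^ (n + 1) := by
      intro y hy
      have h1 : (fun t => if y < t then m y * M y ^ n * m t else 0)
          = (Set.Ioi y).indicator fun t => m y * M y ^ n * m t := by
        funext t; simp [Set.indicator_apply, Set.mem_Ioi]
      rw [h1, lintegral_indicator measurableSet_Ioi, Measure.restrict_restrict measurableSet_Ioi,
        Set.Ioi_inter_Ioi, sup_eq_left.mpr (le_of_lt hy), lintegral_const_mul _ hm]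
      have hMy : (∫⁻ a in Set.Ioi y, m a) = M y := rfl
      rw [hMy, pow_succ, mul_assoc]
    have hR : ∀ t ∈ Set.Ioi x, (∫⁻ y in Set.Ioi x, (if y < t then m y * M y ^ n * m t else 0))
        = (M x ^ (n + 1) / (n + 1) - M t ^ (n + 1) / (n + 1)) * m t := by
      intro t ht
      have h1 : (fun y => if y < t then m y * M y ^ n * m t else 0)
          = (Set.Iio t).indicator fun y => m y * M y ^ n * m t := by
        funext y; simp [Set.indicator_apply, Set.mem_Iio]
      rw [h1, lintegral_indicator measurableSet_Iio, Measure.restrict_restrict measurableSet_Iio,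
        Set.Iio_inter_Ioi, lintegral_mul_const (f := fun a => m a * M a ^ n) _ (hm.mul (hMmeas.pow_const n)), hsplit t ht]
    have hkey : (∫⁻ y in Set.Ioi x, m y * M y ^ (n + 1))
        = ∫⁻ t in Set.Ioi x, (M x ^ (n + 1) / (n + 1) - M t ^ (n + 1) / (n + 1)) * m t := by
      calc (∫⁻ y in Set.Ioi x, m y * M y ^ (n + 1))
          = ∫⁻ y in Set.Ioi x, (∫⁻ t in Set.Ioi x, (if y < t then m y * M y ^ n * m t else 0)) :=
            (setLIntegral_congr_fun measurableSet_Ioi hL).symm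
        _ = ∫⁻ t in Set.Ioi x, (∫⁻ y in Set.Ioi x, (if y < t then m y * M y ^ n * m t else 0)) :=
            hswap
        _ = ∫⁻ t in Set.Ioi x, (M x ^ (n + 1) / (n + 1) - M t ^ (n + 1) / (n + 1)) * m t :=
            setLIntegral_congr_fun measurableSet_Ioi hR
    -- a priori bound
    have hApriori : (∫⁻ y in Set.Ioi x, m y * M y ^ (n + 1)) ≤ M x ^ (n + 2) := by
      calc (∫⁻ y in Set.Ioi x, m y * M y ^ (n + 1))
          ≤ ∫⁻ y in Set.Ioi x, m y * M x ^ (n + 1) :=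
            setLIntegral_mono' measurableSet_Ioi fun y hy => by
              gcongr; exact hManti (le_of_lt hy)
        _ = M x ^ (n + 1) * M x := by
            rw [lintegral_mul_const _ hm]
            have hMx : (∫⁻ a in Set.Ioi x, m a) = M x := rfl
            rw [hMx, mul_comm]
        _ = M x ^ (n + 2) := by rw [← pow_succ]
    -- final algebra
    set A := ∫⁻ y in Set.Ioi x, m y * M y ^ (n + 1) with hAdef
    set k : ℝ≥0∞ := (n : ℝ≥0∞) + 1 with hkdef
    have hk0 : k ≠ 0 := by simp [hkdef]
    have hktop : k ≠ ∞ := by simp [hkdef]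
    have hBtop : M x ^ (n + 2) ≠ ∞ := ENNReal.pow_ne_top hx
    have hAtop : A ≠ ∞ := fun h => hBtop (top_le_iff.mp (h ▸ hApriori))
    have hgmeas : Measurable fun t => M t ^ (n + 1) / k * m t :=
      ((hMmeas.pow_const (n + 1)).div_const k).mul hm
    have hgint : (∫⁻ t in Set.Ioi x, M t ^ (n + 1) / k * m t) = A * k⁻¹ := by
      have h1 : ∀ t, M t ^ (n + 1) / k * m t = m t * M t ^ (n + 1) * k⁻¹ := by
        intro t; rw [div_eq_mul_inv]; ring
      simp_rw [h1]
      rw [lintegral_mul_const (f := fun a => m a * M a ^ (n + 1)) _ (hm.mul (hMmeas.pow_const (n + 1)))]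
    have hgne : (∫⁻ t in Set.Ioi x, M t ^ (n + 1) / k * m t) ≠ ∞ := by
      rw [hgint]
      exact ENNReal.mul_ne_top hAtop (by simp [hkdef])
    set B := M x ^ (n + 1) / k * M x with hBdef
    have hBk : B * k = M x ^ (n + 2) := by
      calc B * k = M x ^ (n + 1) / k * k * M x := by rw [hBdef]; ring
        _ = M x ^ (n + 1) * M x := by rw [ENNReal.div_mul_cancel hk0 hktop]
        _ = M x ^ (n + 2) := by rw [← pow_succ]
    have hstep : A = B - A * k⁻¹ := by
      calc A = ∫⁻ t in Set.Ioi x, (M x ^ (n + 1) / k - M t ^ (n + 1) / k) * m t := hkey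
        _ = ∫⁻ t in Set.Ioi x,
              (M x ^ (n + 1) / k * m t - M t ^ (n + 1) / k * m t) := by
            refine setLIntegral_congr_fun measurableSet_Ioi ?_
            intro t ht
            exact ENNReal.sub_mul fun _ _ => hmfin t ht
        _ = (∫⁻ t in Set.Ioi x, M x ^ (n + 1) / k * m t)
              - ∫⁻ t in Set.Ioi x, M t ^ (n + 1) / k * m t := by
            refine lintegral_sub hgmeas hgne ?_
            refine (ae_restrict_iff' measurableSet_Ioi).mpr (Filter.Eventually.of_forall ?_)
            intro t ht
            exact mul_le_mul_left
              (ENNReal.div_le_div_right (pow_le_pow_left' (hManti (le_of_lt ht)) _) k) (m t)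
        _ = B - A * k⁻¹ := by
            rw [hgint, lintegral_const_mul _ hm]
    have hle' : A * k⁻¹ ≤ B := by
      calc A * k⁻¹ ≤ M x ^ (n + 2) * k⁻¹ := mul_le_mul_left hApriori _
        _ = B := by rw [hBdef, div_eq_mul_inv, pow_succ]; ring
    have h2 : A + A * k⁻¹ = B := by
      nth_rewrite 1 [hstep]
      exact tsub_add_cancel_of_le hle'
    have h3 : A * k + A = B * k := by
      rw [← h2, add_mul, mul_assoc, ENNReal.inv_mul_cancel hk0 hktop, mul_one]
    have hfinal : A = M x ^ (n + 2) / (k + 1) := by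
      rw [ENNReal.eq_div_iff (by simp [hkdef]) (by simp [hkdef])]
      rw [mul_comm, mul_add, mul_one, h3, hBk]
    have hgoal2 : (∫⁻ t in Set.Ioi x, m t) = M x := rfl
    rw [hgoal2, hfinal]
    congr 1
    rw [hkdef]
    push_cast
    ring

end Stmt5Aux

open Stmt5Aux

/-- For the recursive functions `u₀ ≡ 1`, `u_{n+1}(x) = ∫_{(x,∞)} (z − x) u_n(z) μ(dz)`,
which are nonnegative, decreasing and finite (integrable) on `[c, ∞)`, one has
`u_n(x) ≤ u₁(x)^n / n!` for all `n ≥ 1` and `x ≥ c`. -/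
theorem stmt_5 (μ : Measure ℝ) (c : ℝ) (u : ℕ → ℝ → ℝ)
    (h0 : ∀ x, u 0 x = 1)
    (hrec : ∀ n, ∀ x ∈ Set.Ici c,
      u (n + 1) x = ∫ z in Set.Ioi x, (z - x) * u n z ∂μ)
    (hint : ∀ n, ∀ x ∈ Set.Ici c,
      IntegrableOn (fun z => (z - x) * u n z) (Set.Ioi x) μ)
    (hnonneg : ∀ n, ∀ x ∈ Set.Ici c, 0 ≤ u n x)
    (hanti : ∀ n, AntitoneOn (u n) (Set.Ici c)) :
    ∀ n, 1 ≤ n → ∀ x ∈ Set.Ici c, u n x ≤ (u 1 x) ^ n / (Nat.factorial n) := by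
  have hmanti : Antitone fun y => μ (Set.Ioi y) :=
    fun a b hab => measure_mono (Set.Ioi_subset_Ioi hab)
  have hm : Measurable fun y => μ (Set.Ioi y) := hmanti.measurable
  set m : ℝ → ℝ≥0∞ := fun y => μ (Set.Ioi y) with hmdef
  set M : ℝ → ℝ≥0∞ := fun y => ∫⁻ t in Set.Ioi y, m t with hMdef
  have hManti : Antitone M := fun a b hab => lintegral_mono_set (Set.Ioi_subset_Ioi hab)
  have hMmeas : Measurable M := hManti.measurable
  have hOR : ∀ x ∈ Set.Ici c, (∫⁻ z in Set.Ioi x, ENNReal.ofReal (z - x) ∂μ) ≠ ∞ := by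
    intro x hx
    have h := (hint 0 x hx).2
    have hle : (∫⁻ z in Set.Ioi x, ENNReal.ofReal (z - x) ∂μ)
        ≤ ∫⁻ z in Set.Ioi x, ‖(z - x) * u 0 z‖₊ ∂μ := by
      refine lintegral_mono fun z => ?_
      rw [h0, mul_one]
      exact Real.ofReal_le_enorm _
    exact fun htop => absurd (top_le_iff.mp (htop ▸ hle)) h.ne
  have hfin : ∀ x ∈ Set.Ici c, ∀ y, x < y → μ (Set.Ioi y) ≠ ∞ :=
    fun x hx => Stmt5Aux.finmeas μ x (hOR x hx)
  have hsf : ∀ x ∈ Set.Ici c, SigmaFinite (μ.restrict (Set.Ioi x)) :=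
    fun x hx => Stmt5Aux.sigmaFinite_restrict_Ioi μ x (hfin x hx)
  have hMU : ∀ x ∈ Set.Ici c, M x = ENNReal.ofReal (u 1 x) := by
    intro x hx
    have := hsf x hx
    have h1 : ENNReal.ofReal (u 1 x) = ∫⁻ z in Set.Ioi x, ENNReal.ofReal ((z - x) * u 0 z) ∂μ := by
      rw [hrec 0 x hx]
      refine ofReal_integral_eq_lintegral_ofReal (hint 0 x hx) ?_
      filter_upwards [ae_restrict_mem measurableSet_Ioi] with z hz
      rw [h0, mul_one]
      simp only [Set.mem_Ioi] at hz
      simp only [Pi.zero_apply]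
      linarith
    have h2 : (∫⁻ z in Set.Ioi x, ENNReal.ofReal ((z - x) * u 0 z) ∂μ)
        = ∫⁻ z in Set.Ioi x, ENNReal.ofReal (z - x) * (fun _ : ℝ => (1 : ℝ≥0∞)) z ∂μ := by
      refine setLIntegral_congr_fun measurableSet_Ioi ?_
      intro z _
      dsimp only
      rw [h0, mul_one, mul_one]
    have h3 := Stmt5Aux.swap_mu μ x (fun _ : ℝ => (1 : ℝ≥0∞)) measurable_const
    have h4 : ∀ y : ℝ, (∫⁻ z in Set.Ioi y, (fun _ : ℝ => (1 : ℝ≥0∞)) z ∂μ) = m y := by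
      intro y
      simp only []
      rw [setLIntegral_one]
    rw [h1, h2, h3]
    simp_rw [h4]
    rfl
  have hMtop : ∀ x ∈ Set.Ici c, M x ≠ ∞ := fun x hx => by
    rw [hMU x hx]; exact ENNReal.ofReal_ne_top
  have hK : ∀ x ∈ Set.Ici c, ∀ k : ℕ,
      (∫⁻ z in Set.Ioi x, ENNReal.ofReal (z - x) * M z ^ k ∂μ)
        ≤ M x ^ (k + 1) / ((k : ℝ≥0∞) + 1) := by
    intro x hx k
    have := hsf x hx
    rw [Stmt5Aux.swap_mu μ x (fun z => M z ^ k) (hMmeas.pow_const k)]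
    have hcore := Stmt5Aux.core m hm hmanti k x (hMtop x hx)
    calc (∫⁻ y in Set.Ioi x, ∫⁻ z in Set.Ioi y, M z ^ k ∂μ)
        ≤ ∫⁻ y in Set.Ioi x, m y * M y ^ k := by
          refine setLIntegral_mono' measurableSet_Ioi fun y hy => ?_
          calc (∫⁻ z in Set.Ioi y, M z ^ k ∂μ)
              ≤ ∫⁻ _ in Set.Ioi y, M y ^ k ∂μ :=
                setLIntegral_mono' measurableSet_Ioi fun z hz =>
                  pow_le_pow_left' (hManti (le_of_lt hz)) k
            _ = M y ^ k * μ (Set.Ioi y) := setLIntegral_const _ _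
            _ = m y * M y ^ k := by rw [mul_comm]
      _ = M x ^ (k + 1) / ((k : ℝ≥0∞) + 1) := hcore
  have main : ∀ k : ℕ, ∀ x ∈ Set.Ici c,
      ENNReal.ofReal (u (k + 1) x) ≤ M x ^ (k + 1) / (Nat.factorial (k + 1) : ℝ≥0∞) := by
    intro k
    induction k with
    | zero =>
      intro x hx
      rw [← hMU x hx]
      simp
    | succ k ih =>
      intro x hx
      have hfact0 : ((Nat.factorial (k + 1) : ℝ≥0∞)) ≠ 0 := by
        simp [Nat.factorial_ne_zero]
      have h1 : ENNReal.ofReal (u (k + 1 + 1) x)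
          = ∫⁻ z in Set.Ioi x, ENNReal.ofReal ((z - x) * u (k + 1) z) ∂μ := by
        rw [hrec (k + 1) x hx]
        refine ofReal_integral_eq_lintegral_ofReal (hint (k + 1) x hx) ?_
        filter_upwards [ae_restrict_mem measurableSet_Ioi] with z hz
        simp only [Set.mem_Ioi] at hz
        simp only [Pi.zero_apply]
        exact mul_nonneg (by linarith) (hnonneg (k + 1) z (le_trans hx (le_of_lt hz)))
      have h2 : (∫⁻ z in Set.Ioi x, ENNReal.ofReal ((z - x) * u (k + 1) z) ∂μ)
          ≤ ∫⁻ z in Set.Ioi x,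
              ENNReal.ofReal (z - x) * M z ^ (k + 1) * ((Nat.factorial (k + 1) : ℝ≥0∞))⁻¹ ∂μ := by
        refine setLIntegral_mono' measurableSet_Ioi fun z hz => ?_
        simp only [Set.mem_Ioi] at hz
        have hzc : z ∈ Set.Ici c := le_trans hx (le_of_lt hz)
        rw [ENNReal.ofReal_mul (by linarith : (0:ℝ) ≤ z - x), mul_assoc]
        refine mul_le_mul_right ?_ _
        calc ENNReal.ofReal (u (k + 1) z)
            ≤ M z ^ (k + 1) / (Nat.factorial (k + 1) : ℝ≥0∞) := ih z hzc
          _ = M z ^ (k + 1) * ((Nat.factorial (k + 1) : ℝ≥0∞))⁻¹ := by rw [div_eq_mul_inv]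
      have h3 : (∫⁻ z in Set.Ioi x,
              ENNReal.ofReal (z - x) * M z ^ (k + 1) * ((Nat.factorial (k + 1) : ℝ≥0∞))⁻¹ ∂μ)
          = (∫⁻ z in Set.Ioi x, ENNReal.ofReal (z - x) * M z ^ (k + 1) ∂μ)
              * ((Nat.factorial (k + 1) : ℝ≥0∞))⁻¹ :=
        lintegral_mul_const _
          (((measurable_id.sub measurable_const).ennreal_ofReal).mul (hMmeas.pow_const _))
      calc ENNReal.ofReal (u (k + 1 + 1) x)
          = ∫⁻ z in Set.Ioi x, ENNReal.ofReal ((z - x) * u (k + 1) z) ∂μ := h1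
        _ ≤ ∫⁻ z in Set.Ioi x,
              ENNReal.ofReal (z - x) * M z ^ (k + 1) * ((Nat.factorial (k + 1) : ℝ≥0∞))⁻¹ ∂μ := h2
        _ = (∫⁻ z in Set.Ioi x, ENNReal.ofReal (z - x) * M z ^ (k + 1) ∂μ)
              * ((Nat.factorial (k + 1) : ℝ≥0∞))⁻¹ := h3
        _ ≤ (M x ^ (k + 1 + 1) / (((k + 1 : ℕ) : ℝ≥0∞) + 1)) * ((Nat.factorial (k + 1) : ℝ≥0∞))⁻¹ :=
            mul_le_mul_left (hK x hx (k + 1)) _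
        _ = M x ^ (k + 1 + 1) / (Nat.factorial (k + 1 + 1) : ℝ≥0∞) := by
            have hne : (((k + 1 : ℕ) : ℝ≥0∞) + 1) ≠ 0 := by
              simp [add_eq_zero]
            have hfs : (Nat.factorial (k + 1 + 1) : ℝ≥0∞)
                = (((k + 1 : ℕ) : ℝ≥0∞) + 1) * (Nat.factorial (k + 1) : ℝ≥0∞) := by
              have h' : Nat.factorial (k + 1 + 1) = (k + 1 + 1) * Nat.factorial (k + 1) :=
                Nat.factorial_succ (k + 1)
              rw [h']
              push_cast
              ring
            rw [hfs, div_eq_mul_inv, div_eq_mul_inv, mul_assoc,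
              ← ENNReal.mul_inv (Or.inl hne) (Or.inl (by simp))]
  intro n hn x hx
  obtain ⟨k, rfl⟩ : ∃ k, n = k + 1 := ⟨n - 1, (Nat.succ_pred_eq_of_pos hn).symm⟩
  have h := main k x hx
  rw [hMU x hx] at h
  have hfpos : (0:ℝ) < (Nat.factorial (k + 1) : ℝ) := by
    exact_mod_cast Nat.factorial_pos _
  have hR : (ENNReal.ofReal (u 1 x)) ^ (k + 1) / ((Nat.factorial (k + 1) : ℕ) : ℝ≥0∞)
      = ENNReal.ofReal (u 1 x ^ (k + 1) / (Nat.factorial (k + 1) : ℝ)) := by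
    rw [ENNReal.ofReal_div_of_pos hfpos, ENNReal.ofReal_pow (hnonneg 1 x hx),
      ENNReal.ofReal_natCast]
  rw [hR] at h
  exact (ENNReal.ofReal_le_ofReal_iff
    (div_nonneg (pow_nonneg (hnonneg 1 x hx) _) hfpos.le)).mp h
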